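/- The group SL(2,ℤ) admits the presentation ⟨y, u ∣ yuy = uyu, (yuy)^4 = 1⟩, where y corresponds to the matrix [[1,1],[0,1]] and u to [[1,0],[-1,1]]. -/

import Mathlib

/-- Generators of the presentation: `y` and `u`. -/
inductive SL2Gen | y | u
deriving DecidableEq

open FreeGroup in
/-- Relators: `yuy (uyu)⁻¹` and `(yuy)^4`. -/
def SL2Rels : Set (FreeGroup SL2Gen) :=
  { of SL2Gen.y * of SL2Gen.u * of SL2Gen.y * (of SL2Gen.u * of SL2Gen.y * of SL2Gen.u)⁻¹,
    (of SL2Gen.y * of SL2Gen.u * of SL2Gen.y) ^ 4 }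

/-- The matrix `[[1,1],[0,1]]` as an element of `SL(2,ℤ)`. -/
def SL2y : Matrix.SpecialLinearGroup (Fin 2) ℤ :=
  ⟨!![1, 1; 0, 1], by simp [Matrix.det_fin_two_of]⟩

/-- The matrix `[[1,0],[-1,1]]` as an element of `SL(2,ℤ)`. -/
def SL2u : Matrix.SpecialLinearGroup (Fin 2) ℤ :=
  ⟨!![1, 0; -1, 1], by simp [Matrix.det_fin_two_of]⟩

namespace SL2Presentation
abbrev SL2 := Matrix.SpecialLinearGroup (Fin 2) ℤ

noncomputable def Tm : SL2 := SL2y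
noncomputable def Um : SL2 := SL2u
noncomputable def Sm : SL2 := Tm * Um * Tm

lemma SLext {A B : SL2} (h : A.1 = B.1) : A = B := Subtype.ext h
lemma coe_mul' (A B : SL2) : (A * B).1 = A.1 * B.1 := rfl

lemma detrel (A : SL2) : A.1 0 0 * A.1 1 1 - A.1 0 1 * A.1 1 0 = 1 := by
  have h := A.2; rw [Matrix.det_fin_two] at h; linarith
lemma coe_one' : (1 : SL2).1 = !![1,0;0,1] := by
  show (1 : Matrix (Fin 2) (Fin 2) ℤ) = _
  exact Matrix.one_fin_two

lemma mul2 (a b c d e f g h : ℤ) :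
    (!![a,b;c,d] : Matrix (Fin 2) (Fin 2) ℤ) * !![e,f;g,h]
      = !![a*e+b*g, a*f+b*h; c*e+d*g, c*f+d*h] :=
  Matrix.mul_fin_two a b c d e f g h

lemma eta2 (A : SL2) : A.1 = !![A.1 0 0, A.1 0 1; A.1 1 0, A.1 1 1] :=
  Matrix.eta_fin_two A.1

lemma coe_T_zpow (m : ℤ) : (Tm ^ m).1 = !![1, m; 0, 1] := by
  have h : Tm = ModularGroup.T := by apply SLext; rfl
  rw [h]; exact ModularGroup.coe_T_zpow m

lemma coe_Sm : Sm.1 = !![0, 1; -1, 0] := by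
  show (Tm * Um * Tm).1 = _
  rw [coe_mul', coe_mul']
  show (!![1,1;0,1] : Matrix (Fin 2) (Fin 2) ℤ) * !![1,0;-1,1] * !![1,1;0,1] = _
  rw [mul2, mul2]; norm_num

lemma coe_Sm_inv : (Sm⁻¹).1 = !![0, -1; 1, 0] := by
  have : Sm⁻¹ = (⟨!![0, -1; 1, 0], by simp [Matrix.det_fin_two_of]⟩ : SL2) := by
    apply inv_eq_of_mul_eq_one_right
    apply SLext
    show Sm.1 * (!![0, -1; 1, 0] : Matrix (Fin 2) (Fin 2) ℤ) = _
    rw [coe_Sm]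
    show _ = (1 : SL2).1
    rw [mul2, coe_one']
    norm_num
  rw [this]

lemma coe_S2 : (Sm^2).1 = !![-1,0;0,-1] := by
  rw [sq, coe_mul', coe_Sm, mul2]; norm_num

lemma Sm4 : Sm^4 = 1 := by
  have h : Sm^4 = Sm^2 * Sm^2 := by group
  apply SLext
  rw [h, coe_mul', coe_S2, mul2, coe_one']; norm_num

lemma Sm_inv_eq : Sm⁻¹ = Sm^2 * Sm := by
  apply SLext; rw [coe_Sm_inv, coe_mul', coe_S2, coe_Sm, mul2]; norm_num

lemma S2_comm (g : SL2) : Sm^2 * g = g * Sm^2 := by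
  apply SLext
  rw [coe_mul', coe_mul', coe_S2, eta2 g, mul2, mul2]
  ring_nf

lemma Um_eq_conj : Um = Sm * Tm * Sm⁻¹ := by
  apply SLext
  rw [coe_mul', coe_mul', coe_Sm, coe_Sm_inv]
  show _ = !![(0:ℤ),1;-1,0] * !![1,1;0,1] * !![0,-1;1,0]
  rw [mul2, mul2]
  show (!![1, 0; -1, 1] : Matrix (Fin 2) (Fin 2) ℤ) = _
  norm_num

lemma conjT (k : ℤ) : Sm * Tm^k * Sm⁻¹ = Um^k := by
  have h := map_zpow (MulAut.conj Sm) Tm k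
  simp only [MulAut.conj_apply] at h
  rw [h, ← Um_eq_conj]

lemma coe_U_zpow (k : ℤ) : (Um^k).1 = !![1, 0; -k, 1] := by
  rw [← conjT, coe_mul', coe_mul', coe_Sm, coe_Sm_inv, coe_T_zpow, mul2, mul2]
  norm_num

lemma SU_rule (k : ℤ) : Sm * Tm^k = Um^k * Sm := by
  have h := conjT k
  calc Sm * Tm^k = (Sm * Tm^k * Sm⁻¹) * Sm := by group
    _ = Um^k * Sm := by rw [h]

lemma conjT' (k : ℤ) : Sm⁻¹ * Tm^k * Sm = Um^k := by
  calc Sm⁻¹ * Tm^k * Sm = Sm⁻¹ * Sm⁻¹ * ((Sm * Tm^k * Sm⁻¹) * Sm^2) := by group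
    _ = Sm⁻¹ * Sm⁻¹ * (Um^k * Sm^2) := by rw [conjT]
    _ = Sm⁻¹ * Sm⁻¹ * (Sm^2 * Um^k) := by rw [S2_comm (Um^k)]
    _ = Um^k := by group

lemma TS_rule (k : ℤ) : Tm^k * Sm = Sm * Um^k := by
  have h := conjT' k
  calc Tm^k * Sm = Sm * (Sm⁻¹ * Tm^k * Sm) := by group
    _ = Sm * Um^k := by rw [h]

lemma SinvTU : Sm⁻¹ * Tm * Um = Tm⁻¹ := by
  have h : Sm = Tm * Um * Tm := rfl
  rw [h]; group

lemma STinvUinv : Sm * Tm⁻¹ * Um⁻¹ = Tm := by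
  have h : Sm = Tm * Um * Tm := rfl
  rw [h]; group

/-- entries of T^m * A -/
lemma T_smul (m : ℤ) (A : SL2) : (Tm^m * A).1
    = !![A.1 0 0 + m * A.1 1 0, A.1 0 1 + m * A.1 1 1; A.1 1 0, A.1 1 1] := by
  apply Matrix.ext; intro i j
  fin_cases i <;> fin_cases j <;>
    simp [coe_mul', coe_T_zpow, Matrix.mul_apply, Fin.sum_univ_two] <;> ring

/-- entries of U^k * A -/
lemma U_smul (k : ℤ) (A : SL2) : (Um^k * A).1
    = !![A.1 0 0, A.1 0 1; A.1 1 0 - k * A.1 0 0, A.1 1 1 - k * A.1 0 1] := by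
  apply Matrix.ext; intro i j
  fin_cases i <;> fin_cases j <;>
    simp [coe_mul', coe_U_zpow, Matrix.mul_apply, Fin.sum_univ_two] <;> ring

/-- entries of S * A -/
lemma S_smul (A : SL2) : (Sm * A).1
    = !![A.1 1 0, A.1 1 1; -A.1 0 0, -A.1 0 1] := by
  apply Matrix.ext; intro i j
  fin_cases i <;> fin_cases j <;>
    simp [coe_mul', coe_Sm, Matrix.mul_apply, Fin.sum_univ_two]

/-- entries of S⁻¹ * A -/
lemma Sinv_smul (A : SL2) : (Sm⁻¹ * A).1
    = !![-A.1 1 0, -A.1 1 1; A.1 0 0, A.1 0 1] := by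
  rw [coe_mul', coe_Sm_inv]
  apply Matrix.ext; intro i j
  fin_cases i <;> fin_cases j <;>
    simp [Matrix.mul_apply, Fin.sum_univ_two]

/-- entries of S^2 * A -/
lemma S2_smul (A : SL2) : (Sm^2 * A).1
    = !![-A.1 0 0, -A.1 0 1; -A.1 1 0, -A.1 1 1] := by
  rw [coe_mul', coe_S2]
  apply Matrix.ext; intro i j
  fin_cases i <;> fin_cases j <;>
    simp [Matrix.mul_apply, Fin.sum_univ_two]

/-- euclidean division helper -/
lemma ediv_eq (a b q r : ℤ) (heq : a = b*q + r) (h0 : 0 ≤ r) (hr : r < |b|) : a / b = q := by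
  have hb : b ≠ 0 := by rintro rfl; simp at hr; omega
  subst heq
  rcases lt_or_gt_of_ne hb with hneg | hpos
  · rw [abs_of_neg hneg] at hr
    have h1 : b * q + r = r + (-b) * (-q) := by ring
    have h2 : (r + (-b) * (-q)) / (-b) = r / (-b) + (-q) :=
      Int.add_mul_ediv_left r (-q) (by omega : (-b:ℤ) ≠ 0)
    have h3 : r / (-b) = 0 := Int.ediv_eq_zero_of_lt h0 (by omega)
    have h4 : (b*q+r) / (-(-b)) = -((b*q+r) / (-b)) := Int.ediv_neg (b*q+r) (-b)
    simp only [neg_neg] at h4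
    rw [h4, h1, h2, h3]
    ring
  · rw [abs_of_pos hpos] at hr
    have h1 : b * q + r = r + b * q := by ring
    rw [h1, Int.add_mul_ediv_left r q (by omega : b ≠ 0)]
    have : r / b = 0 := Int.ediv_eq_zero_of_lt h0 hr
    omega

lemma emod_bounds (a c : ℤ) (hc : c ≠ 0) : 0 ≤ a % c ∧ a % c < |c| := by
  constructor
  · exact Int.emod_nonneg a hc
  · rcases lt_or_gt_of_ne hc with hneg | hpos
    · rw [abs_of_neg hneg, ← Int.emod_neg]
      exact Int.emod_lt_of_pos a (by omega)
    · rw [abs_of_pos hpos]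
      exact Int.emod_lt_of_pos a hpos

lemma emod_def' (a c : ℤ) : a % c = a - c * (a/c) := Int.emod_def a c


abbrev P := PresentedGroup SL2Rels




noncomputable def yP : P := PresentedGroup.of SL2Gen.y
noncomputable def uP : P := PresentedGroup.of SL2Gen.u
noncomputable def sP : P := yP * uP * yP

lemma rel_one {r : FreeGroup SL2Gen} (hr : r ∈ SL2Rels) : PresentedGroup.mk SL2Rels r = 1 :=
  (QuotientGroup.eq_one_iff r).mpr (Subgroup.subset_normalClosure hr)

lemma braid : yP * uP * yP = uP * yP * uP := by
  have h := rel_one (show FreeGroup.of SL2Gen.y * FreeGroup.of SL2Gen.u * FreeGroup.of SL2Gen.y *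
      (FreeGroup.of SL2Gen.u * FreeGroup.of SL2Gen.y * FreeGroup.of SL2Gen.u)⁻¹ ∈ SL2Rels by
    exact Set.mem_insert _ _)
  simp only [map_mul, map_inv] at h
  have h2 : (PresentedGroup.mk SL2Rels) (FreeGroup.of SL2Gen.y) = yP := rfl
  have h3 : (PresentedGroup.mk SL2Rels) (FreeGroup.of SL2Gen.u) = uP := rfl
  rw [h2, h3, mul_inv_eq_one] at h
  exact h

lemma sP4 : sP ^ 4 = 1 := by
  have h := rel_one (show (FreeGroup.of SL2Gen.y * FreeGroup.of SL2Gen.u *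
      FreeGroup.of SL2Gen.y) ^ 4 ∈ SL2Rels by
    exact Set.mem_insert_of_mem _ rfl)
  simp only [map_pow, map_mul] at h
  exact h

lemma sP2_sq : sP^2 * sP^2 = 1 := by
  have : sP^2*sP^2 = sP^4 := by group
  rw [this, sP4]

lemma i2 : sP * yP = uP * sP := by
  calc sP * yP = (yP*uP*yP)*yP := rfl
    _ = (uP*yP*uP)*yP := by rw [braid]
    _ = uP * sP := by show _ = uP*(yP*uP*yP); group

lemma i3 : sP * uP = yP * sP := by
  calc sP * uP = (yP*uP*yP)*uP := rfl
    _ = yP * (uP*yP*uP) := by group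
    _ = yP * (yP*uP*yP) := by rw [braid]
    _ = yP * sP := rfl

lemma cenY : sP^2 * yP = yP * sP^2 := by
  calc sP^2 * yP = sP * (sP * yP) := by rw [sq, mul_assoc]
    _ = sP * (uP * sP) := by rw [i2]
    _ = (sP * uP) * sP := by group
    _ = (yP * sP) * sP := by rw [i3]
    _ = yP * sP^2 := by rw [sq, mul_assoc]

lemma cenU : sP^2 * uP = uP * sP^2 := by
  calc sP^2 * uP = sP * (sP * uP) := by rw [sq, mul_assoc]
    _ = sP * (yP * sP) := by rw [i3]
    _ = (sP * yP) * sP := by group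
    _ = (uP * sP) * sP := by rw [i2]
    _ = uP * sP^2 := by rw [sq, mul_assoc]

lemma cenYz (k : ℤ) : sP^2 * yP^k = yP^k * sP^2 :=
  (Commute.zpow_right (cenY) k).eq

lemma conjY : sP * yP * sP⁻¹ = uP := by
  rw [i2]; group

lemma u_eq : sP⁻¹ * yP * sP = uP := by
  have h := i3
  calc sP⁻¹ * yP * sP = sP⁻¹ * (yP * sP) := by group
    _ = sP⁻¹ * (sP * uP) := by rw [h]
    _ = uP := by group

lemma conjYz (k : ℤ) : sP * yP^k * sP⁻¹ = uP^k := by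
  have h := map_zpow (MulAut.conj sP) yP k
  simp only [MulAut.conj_apply] at h
  rw [h, conjY]

lemma conjYz' (k : ℤ) : sP⁻¹ * yP^k * sP = uP^k := by
  have h := map_zpow (MulAut.conj sP⁻¹) yP k
  simp only [MulAut.conj_apply, inv_inv] at h
  rw [h, u_eq]

/-- u^k s = s y^k -/
lemma UPs (k : ℤ) : uP^k * sP = sP * yP^k := by
  have h := conjYz k
  calc uP^k * sP = (sP * yP^k * sP⁻¹) * sP := by rw [h]
    _ = sP * yP^k := by group

/-- u^k s⁻¹ = s⁻¹ y^k -/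
lemma UPsinv (k : ℤ) : uP^k * sP⁻¹ = sP⁻¹ * yP^k := by
  have h := conjYz' k
  calc uP^k * sP⁻¹ = (sP⁻¹ * yP^k * sP) * sP⁻¹ := by rw [h]
    _ = sP⁻¹ * yP^k := by group

/-- y⁻¹ s y⁻¹ = u -/
lemma i5 : yP⁻¹ * sP * yP⁻¹ = uP := by
  show yP⁻¹ * (yP*uP*yP) * yP⁻¹ = uP
  group

/-- y s⁻¹ y = u⁻¹ -/
lemma i5inv : yP * sP⁻¹ * yP = uP⁻¹ := by
  show yP * (yP*uP*yP)⁻¹ * yP = uP⁻¹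
  group




lemma c0_cases (A : SL2) (hc : A.1 1 0 = 0) :
    A.1 0 0 = 1 ∧ A.1 1 1 = 1 ∨ A.1 0 0 = -1 ∧ A.1 1 1 = -1 := by
  have hd := detrel A
  rw [hc, mul_zero, sub_zero] at hd
  rcases Int.eq_one_or_neg_one_of_mul_eq_one' hd with ⟨h1,h2⟩|⟨h1,h2⟩ <;> simp [h1,h2]

/-- The inverse map `SL(2,ℤ) → P`, defined by the euclidean algorithm on the
bottom-left entry. -/
noncomputable def psi (A : SL2) : P :=
  if hc : A.1 1 0 = 0 then
    if A.1 0 0 = 1 then yP ^ (A.1 0 1) else sP^2 * yP ^ (-(A.1 0 1))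
  else
    if hpos : 0 < A.1 1 0 then
      yP ^ (A.1 0 0 / A.1 1 0) * sP⁻¹ * psi (Sm * (Tm ^ (-(A.1 0 0 / A.1 1 0)) * A))
    else
      yP ^ (A.1 0 0 / A.1 1 0) * sP * psi (Sm⁻¹ * (Tm ^ (-(A.1 0 0 / A.1 1 0)) * A))
termination_by (A.1 1 0).natAbs
decreasing_by
  · have h := emod_bounds (A.1 0 0) (A.1 1 0) hc
    rw [Int.abs_eq_natAbs] at h
    have hdef := emod_def' (A.1 0 0) (A.1 1 0)
    have e : (Sm * (Tm ^ (-(A.1 0 0 / A.1 1 0)) * A)).1 1 0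
        = -((Tm ^ (-(A.1 0 0 / A.1 1 0)) * A).1 0 0) := by
      rw [S_smul]; simp
    have e2 : (Tm ^ (-(A.1 0 0 / A.1 1 0)) * A).1 0 0
        = A.1 0 0 % A.1 1 0 := by
      rw [T_smul]; show A.1 0 0 + -(A.1 0 0 / A.1 1 0) * A.1 1 0 = _
      rw [emod_def']; ring
    rw [e, e2]
    omega
  · have h := emod_bounds (A.1 0 0) (A.1 1 0) hc
    rw [Int.abs_eq_natAbs] at h
    have hdef := emod_def' (A.1 0 0) (A.1 1 0)
    have e : (Sm⁻¹ * (Tm ^ (-(A.1 0 0 / A.1 1 0)) * A)).1 1 0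
        = (Tm ^ (-(A.1 0 0 / A.1 1 0)) * A).1 0 0 := by
      rw [Sinv_smul]; simp
    have e2 : (Tm ^ (-(A.1 0 0 / A.1 1 0)) * A).1 0 0
        = A.1 0 0 % A.1 1 0 := by
      rw [T_smul]; show A.1 0 0 + -(A.1 0 0 / A.1 1 0) * A.1 1 0 = _
      rw [emod_def']; ring
    rw [e, e2]
    omega

lemma psi_c0 (A : SL2) (hc : A.1 1 0 = 0) (h1 : A.1 0 0 = 1) :
    psi A = yP ^ (A.1 0 1) := by
  rw [psi, dif_pos hc, if_pos h1]

lemma psi_c0' (A : SL2) (hc : A.1 1 0 = 0) (h1 : A.1 0 0 = -1) :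
    psi A = sP^2 * yP ^ (-(A.1 0 1)) := by
  rw [psi, dif_pos hc, if_neg (by omega)]

lemma psi_pos (A : SL2) (hpos : 0 < A.1 1 0) (q : ℤ) (hq : A.1 0 0 / A.1 1 0 = q) :
    psi A = yP ^ q * sP⁻¹ * psi (Sm * (Tm ^ (-q) * A)) := by
  rw [psi, dif_neg (by omega), dif_pos hpos, hq]

lemma psi_neg (A : SL2) (hneg : A.1 1 0 < 0) (q : ℤ) (hq : A.1 0 0 / A.1 1 0 = q) :
    psi A = yP ^ q * sP * psi (Sm⁻¹ * (Tm ^ (-q) * A)) := by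
  rw [psi, dif_neg (by omega), dif_neg (by omega), hq]


-- entry lemmas
section entries
variable (m k : ℤ) (A : SL2)
lemma T00 : (Tm^m * A).1 0 0 = A.1 0 0 + m * A.1 1 0 := by rw [T_smul]; simp
lemma T01 : (Tm^m * A).1 0 1 = A.1 0 1 + m * A.1 1 1 := by rw [T_smul]; simp
lemma T10 : (Tm^m * A).1 1 0 = A.1 1 0 := by rw [T_smul]; simp
lemma T11 : (Tm^m * A).1 1 1 = A.1 1 1 := by rw [T_smul]; simp
lemma U00 : (Um^k * A).1 0 0 = A.1 0 0 := by rw [U_smul]; simp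
lemma U01 : (Um^k * A).1 0 1 = A.1 0 1 := by rw [U_smul]; simp
lemma U10 : (Um^k * A).1 1 0 = A.1 1 0 - k * A.1 0 0 := by rw [U_smul]; simp
lemma U11 : (Um^k * A).1 1 1 = A.1 1 1 - k * A.1 0 1 := by rw [U_smul]; simp
lemma S00 : (Sm * A).1 0 0 = A.1 1 0 := by rw [S_smul]; simp
lemma S01 : (Sm * A).1 0 1 = A.1 1 1 := by rw [S_smul]; simp
lemma S10 : (Sm * A).1 1 0 = -A.1 0 0 := by rw [S_smul]; simp
lemma S11 : (Sm * A).1 1 1 = -A.1 0 1 := by rw [S_smul]; simp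
lemma Si00 : (Sm⁻¹ * A).1 0 0 = -A.1 1 0 := by rw [Sinv_smul]; simp
lemma Si01 : (Sm⁻¹ * A).1 0 1 = -A.1 1 1 := by rw [Sinv_smul]; simp
lemma Si10 : (Sm⁻¹ * A).1 1 0 = A.1 0 0 := by rw [Sinv_smul]; simp
lemma Si11 : (Sm⁻¹ * A).1 1 1 = A.1 0 1 := by rw [Sinv_smul]; simp
lemma N00 : (Sm^2 * A).1 0 0 = -A.1 0 0 := by rw [S2_smul]; simp
lemma N01 : (Sm^2 * A).1 0 1 = -A.1 0 1 := by rw [S2_smul]; simp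
lemma N10 : (Sm^2 * A).1 1 0 = -A.1 1 0 := by rw [S2_smul]; simp
lemma N11 : (Sm^2 * A).1 1 1 = -A.1 1 1 := by rw [S2_smul]; simp
end entries

/-- T-cocycle -/
lemma psi_T (m : ℤ) (A : SL2) : psi (Tm^m * A) = yP^m * psi A := by
  by_cases hc : A.1 1 0 = 0
  · rcases c0_cases A hc with ⟨h1, h2⟩ | ⟨h1, h2⟩
    · rw [psi_c0 A hc h1, psi_c0 (Tm^m*A) (by rw [T10]; exact hc) (by rw [T00, hc, h1]; ring)]
      rw [T01, h2, ← zpow_add]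
      congr 1; ring
    · rw [psi_c0' A hc h1, psi_c0' (Tm^m*A) (by rw [T10]; exact hc) (by rw [T00, hc, h1]; ring)]
      rw [T01, h2]
      calc sP^2 * yP^(-(A.1 0 1 + m * -1)) = sP^2 * (yP^m * yP^(-A.1 0 1)) := by
            rw [← zpow_add]; congr 1; ring
        _ = (sP^2 * yP^m) * yP^(-A.1 0 1) := by group
        _ = (yP^m * sP^2) * yP^(-A.1 0 1) := by rw [cenYz]
        _ = yP^m * (sP^2 * yP^(-A.1 0 1)) := by group
  · set q := A.1 0 0 / A.1 1 0 with hqdef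
    have hq' : (Tm^m*A).1 0 0 / (Tm^m*A).1 1 0 = q + m := by
      rw [T00, T10, Int.add_mul_ediv_right _ _ hc]
    rcases lt_or_gt_of_ne hc with hneg | hpos
    · rw [psi_neg (Tm^m*A) (by rw [T10]; exact hneg) (q+m) hq',
        psi_neg A hneg q rfl]
      have hmat : Sm⁻¹ * (Tm ^ (-(q+m)) * (Tm^m * A)) = Sm⁻¹ * (Tm ^ (-q) * A) := by group
      rw [hmat]
      calc yP^(q+m) * sP * psi (Sm⁻¹ * (Tm ^ (-q) * A))
          = yP^m * yP^q * sP * psi (Sm⁻¹ * (Tm ^ (-q) * A)) := by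
            rw [← zpow_add]; congr 2; ring
        _ = yP^m * (yP^q * sP * psi (Sm⁻¹ * (Tm ^ (-q) * A))) := by group
    · rw [psi_pos (Tm^m*A) (by rw [T10]; exact hpos) (q+m) hq',
        psi_pos A hpos q rfl]
      have hmat : Sm * (Tm ^ (-(q+m)) * (Tm^m * A)) = Sm * (Tm ^ (-q) * A) := by group
      rw [hmat]
      calc yP^(q+m) * sP⁻¹ * psi (Sm * (Tm ^ (-q) * A))
          = yP^m * yP^q * sP⁻¹ * psi (Sm * (Tm ^ (-q) * A)) := by
            rw [← zpow_add]; congr 2; ring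
        _ = yP^m * (yP^q * sP⁻¹ * psi (Sm * (Tm ^ (-q) * A))) := by group

/-- the terminal value: psi (T^m) = y^m -/
lemma psi_Tpow (m : ℤ) : psi (Tm^m) = yP^m := by
  have h : Tm^m = Tm^m * 1 := by group
  have hc : (Tm^m).1 1 0 = 0 := by rw [coe_T_zpow]; simp
  have h0 : (Tm^m).1 0 0 = 1 := by rw [coe_T_zpow]; simp
  have h01 : (Tm^m).1 0 1 = m := by rw [coe_T_zpow]; simp
  rw [psi_c0 _ hc h0, h01]

lemma psi_one : psi 1 = 1 := by
  have := psi_Tpow 0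
  simpa using this


/-- single U-step at B-shapes (top-left positive, bottom-left negative, reduced):
pure computation. -/
lemma GplusB (B : SL2) (h0 : 0 < B.1 0 0) (h1 : B.1 1 0 < 0) (h2 : -B.1 1 0 < B.1 0 0) :
    psi (Um^(1:ℤ) * B) = uP * psi B := by
  have hX10 : (Um^(1:ℤ) * B).1 1 0 = B.1 1 0 - B.1 0 0 := by rw [U10]; ring
  have hX00 : (Um^(1:ℤ) * B).1 0 0 = B.1 0 0 := U00 1 B
  have hq : (Um^(1:ℤ)*B).1 0 0 / (Um^(1:ℤ)*B).1 1 0 = 0 := by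
    rw [hX00, hX10]
    exact ediv_eq _ _ 0 (B.1 0 0) (by ring) (by omega)
      (by rw [abs_of_neg (by omega : B.1 1 0 - B.1 0 0 < 0)]; omega)
  rw [psi_neg _ (by rw [hX10]; omega) 0 hq]
  simp only [neg_zero, zpow_zero, one_mul]
  set X2 := Sm⁻¹ * (Um^(1:ℤ) * B) with hX2def
  have hX200 : X2.1 0 0 = B.1 0 0 - B.1 1 0 := by rw [hX2def, Si00, hX10]; ring
  have hX210 : X2.1 1 0 = B.1 0 0 := by rw [hX2def, Si10, hX00]
  have hq2 : X2.1 0 0 / X2.1 1 0 = 1 := by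
    rw [hX200, hX210]
    exact ediv_eq _ _ 1 (-B.1 1 0) (by ring) (by omega) (by rw [abs_of_pos h0]; omega)
  rw [psi_pos X2 (by rw [hX210]; exact h0) 1 hq2]
  have hmat : Sm * (Tm^(-(1:ℤ)) * X2) = B := by
    rw [hX2def]
    calc Sm * (Tm^(-(1:ℤ)) * (Sm⁻¹ * (Um^(1:ℤ) * B)))
        = (Sm * Tm^(-(1:ℤ)) * Sm⁻¹) * (Um^(1:ℤ) * B) := by group
      _ = Um^(-(1:ℤ)) * (Um^(1:ℤ) * B) := by rw [conjT]
      _ = B := by group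
  rw [hmat]
  calc sP * (yP^(1:ℤ) * sP⁻¹ * psi B) = (sP * yP * sP⁻¹) * psi B := by group
    _ = uP * psi B := by rw [conjY]


/-- negative-side chain at W-shapes: pure. -/
lemma cW1 (W : SL2) (h0 : 0 < W.1 0 0) (hv : 0 < W.1 1 0) (hlt : W.1 1 0 < W.1 0 0)
    (k : ℤ) (hk : k ≤ -1) : psi (Um^k * W) = uP^k * psi W := by
  have hX10 : (Um^k * W).1 1 0 = W.1 1 0 - k * W.1 0 0 := U10 k W
  have hX00 : (Um^k * W).1 0 0 = W.1 0 0 := U00 k W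
  have hkpos : W.1 0 0 ≤ -k * W.1 0 0 := by nlinarith
  have hq : (Um^k*W).1 0 0 / (Um^k*W).1 1 0 = 0 := by
    rw [hX00, hX10]
    exact ediv_eq _ _ 0 (W.1 0 0) (by ring) (by omega)
      (by rw [abs_of_pos (by nlinarith : (0:ℤ) < W.1 1 0 - k * W.1 0 0)]; nlinarith)
  rw [psi_pos _ (by rw [hX10]; nlinarith) 0 hq]
  simp only [neg_zero, zpow_zero, one_mul]
  set X2 := Sm * (Um^k * W) with hX2def
  have hX200 : X2.1 0 0 = W.1 1 0 - k * W.1 0 0 := by rw [hX2def, S00, hX10]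
  have hX210 : X2.1 1 0 = -W.1 0 0 := by rw [hX2def, S10, hX00]
  have hq2 : X2.1 0 0 / X2.1 1 0 = k := by
    rw [hX200, hX210]
    exact ediv_eq _ _ k (W.1 1 0) (by ring) (by omega) (by rw [abs_of_neg (by omega)]; omega)
  rw [psi_neg X2 (by rw [hX210]; omega) k hq2]
  have hmat : Sm⁻¹ * (Tm^(-k) * X2) = W := by
    rw [hX2def]
    calc Sm⁻¹ * (Tm^(-k) * (Sm * (Um^k * W)))
        = (Sm⁻¹ * Tm^(-k) * Sm) * (Um^k * W) := by group
      _ = Um^(-k) * (Um^k * W) := by rw [conjT']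
      _ = W := by group
  rw [hmat]
  calc sP⁻¹ * (yP^k * sP * psi W) = (sP⁻¹ * yP^k * sP) * psi W := by group
    _ = uP^k * psi W := by rw [conjYz']

/-- positive-side chain reduction at W-shapes: pure. -/
lemma cW2 (W : SL2) (h0 : 0 < W.1 0 0) (hv : 0 < W.1 1 0) (hlt : W.1 1 0 < W.1 0 0)
    (k : ℤ) (hk : 1 ≤ k) :
    psi (Um^k * W) = sP * yP^(k-1) * sP⁻¹ * psi (Um^(1:ℤ) * W) := by
  rcases eq_or_lt_of_le hk with heq | hk2
  · rw [← heq]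
    simp only [sub_self, zpow_zero, mul_one]
    group
  · have hk2 : 2 ≤ k := hk2
    have hX10 : (Um^k * W).1 1 0 = W.1 1 0 - k * W.1 0 0 := U10 k W
    have hX00 : (Um^k * W).1 0 0 = W.1 0 0 := U00 k W
    have hbig : 2 * W.1 0 0 ≤ k * W.1 0 0 := by nlinarith
    have hq : (Um^k*W).1 0 0 / (Um^k*W).1 1 0 = 0 := by
      rw [hX00, hX10]
      exact ediv_eq _ _ 0 (W.1 0 0) (by ring) (by omega)
        (by rw [abs_of_neg (by omega : W.1 1 0 - k * W.1 0 0 < 0)]; omega)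
    rw [psi_neg _ (by rw [hX10]; omega) 0 hq]
    simp only [neg_zero, zpow_zero, one_mul]
    set X2 := Sm⁻¹ * (Um^k * W) with hX2def
    have hX200 : X2.1 0 0 = k * W.1 0 0 - W.1 1 0 := by rw [hX2def, Si00, hX10]; ring
    have hX210 : X2.1 1 0 = W.1 0 0 := by rw [hX2def, Si10, hX00]
    have hq2 : X2.1 0 0 / X2.1 1 0 = k - 1 := by
      rw [hX200, hX210]
      exact ediv_eq _ _ (k-1) (W.1 0 0 - W.1 1 0) (by ring) (by omega)
        (by rw [abs_of_pos h0]; omega)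
    rw [psi_pos X2 (by rw [hX210]; exact h0) (k-1) hq2]
    have hmat : Sm * (Tm^(-(k-1)) * X2) = Um^(1:ℤ) * W := by
      rw [hX2def]
      calc Sm * (Tm^(-(k-1)) * (Sm⁻¹ * (Um^k * W)))
          = (Sm * Tm^(-(k-1)) * Sm⁻¹) * (Um^k * W) := by group
        _ = Um^(-(k-1)) * (Um^k * W) := by rw [conjT]
        _ = Um^(1:ℤ) * W := by
            have : Um^(-(k-1)) * (Um^k * W) = Um^(-(k-1)+k) * W := by group
            rw [this]
            congr 1
            congr 1
            ring
    rw [hmat]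
    group

/-- crossing step, regime v < τ - v : pure -/
lemma crossW1 (W : SL2) (h0 : 0 < W.1 0 0) (hv : 0 < W.1 1 0)
    (hreg : 2 * W.1 1 0 < W.1 0 0) :
    psi (Um^(1:ℤ) * W) = uP * psi W := by
  have hX10 : (Um^(1:ℤ) * W).1 1 0 = W.1 1 0 - W.1 0 0 := by rw [U10]; ring
  have hX00 : (Um^(1:ℤ) * W).1 0 0 = W.1 0 0 := U00 1 W
  have hq : (Um^(1:ℤ)*W).1 0 0 / (Um^(1:ℤ)*W).1 1 0 = -1 := by
    rw [hX00, hX10]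
    exact ediv_eq _ _ (-1) (W.1 1 0) (by ring) (by omega)
      (by rw [abs_of_neg (by omega : W.1 1 0 - W.1 0 0 < 0)]; omega)
  rw [psi_neg _ (by rw [hX10]; omega) (-1) hq]
  simp only [neg_neg]
  have hmat : Sm⁻¹ * (Tm^(1:ℤ) * (Um^(1:ℤ) * W)) = Tm^(-(1:ℤ)) * W := by
    calc Sm⁻¹ * (Tm^(1:ℤ) * (Um^(1:ℤ) * W)) = (Sm⁻¹ * Tm * Um) * W := by group
      _ = Tm⁻¹ * W := by rw [SinvTU]
      _ = Tm^(-(1:ℤ)) * W := by group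
  rw [hmat, psi_T]
  calc yP^(-(1:ℤ)) * sP * (yP^(-(1:ℤ)) * psi W) = (yP⁻¹ * sP * yP⁻¹) * psi W := by group
    _ = uP * psi W := by rw [i5]

/-- reverse crossing step, regime r < τ - r : pure -/
lemma crossB1 (B : SL2) (h0 : 0 < B.1 0 0) (hr : B.1 1 0 < 0)
    (hreg : 2 * (-B.1 1 0) < B.1 0 0) :
    psi (Um^(-(1:ℤ)) * B) = uP⁻¹ * psi B := by
  have hX10 : (Um^(-(1:ℤ)) * B).1 1 0 = B.1 1 0 + B.1 0 0 := by rw [U10]; ring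
  have hX00 : (Um^(-(1:ℤ)) * B).1 0 0 = B.1 0 0 := U00 (-1) B
  have hq : (Um^(-(1:ℤ))*B).1 0 0 / (Um^(-(1:ℤ))*B).1 1 0 = 1 := by
    rw [hX00, hX10]
    exact ediv_eq _ _ 1 (-B.1 1 0) (by ring) (by omega)
      (by rw [abs_of_pos (by omega : (0:ℤ) < B.1 1 0 + B.1 0 0)]; omega)
  rw [psi_pos _ (by rw [hX10]; omega) 1 hq]
  have hmat : Sm * (Tm^(-(1:ℤ)) * (Um^(-(1:ℤ)) * B)) = Tm^(1:ℤ) * B := by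
    calc Sm * (Tm^(-(1:ℤ)) * (Um^(-(1:ℤ)) * B)) = (Sm * Tm⁻¹ * Um⁻¹) * B := by group
      _ = Tm * B := by rw [STinvUinv]
      _ = Tm^(1:ℤ) * B := by group
  rw [hmat, psi_T]
  calc yP^(1:ℤ) * sP⁻¹ * (yP^(1:ℤ) * psi B) = (yP * sP⁻¹ * yP) * psi B := by group
    _ = uP⁻¹ * psi B := by rw [i5inv]


section Tp
variable (m : ℤ)
lemma Tp00 : (Tm^m).1 0 0 = 1 := by rw [coe_T_zpow]; simp
lemma Tp01 : (Tm^m).1 0 1 = m := by rw [coe_T_zpow]; simp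
lemma Tp10 : (Tm^m).1 1 0 = 0 := by rw [coe_T_zpow]; simp
lemma Tp11 : (Tm^m).1 1 1 = 1 := by rw [coe_T_zpow]; simp
end Tp

/-- crossing step, edge case τ = 2, v = 1 -/
lemma crossWedge (W : SL2) (h2 : W.1 0 0 = 2) (h1 : W.1 1 0 = 1) :
    psi (Um^(1:ℤ) * W) = uP * psi W := by
  have hdet := detrel W
  rw [h2, h1, mul_one] at hdet
  -- psi W
  have hqW : W.1 0 0 / W.1 1 0 = 2 := by rw [h2, h1]; decide
  rw [psi_pos W (by omega) 2 hqW]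
  set X2 := Sm * (Tm^(-(2:ℤ)) * W) with hX2def
  have hX200 : X2.1 0 0 = 1 := by rw [hX2def, S00, T10, h1]
  have hX210 : X2.1 1 0 = 0 := by rw [hX2def, S10, T00, h2, h1]; ring
  have hX201 : X2.1 0 1 = W.1 1 1 := by rw [hX2def, S01, T11]
  rw [psi_c0 X2 hX210 hX200, hX201]
  -- psi (U W)
  have hX10 : (Um^(1:ℤ) * W).1 1 0 = -1 := by rw [U10, h2, h1]; ring
  have hX00 : (Um^(1:ℤ) * W).1 0 0 = 2 := by rw [U00, h2]
  have hq : (Um^(1:ℤ)*W).1 0 0 / (Um^(1:ℤ)*W).1 1 0 = -2 := by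
    rw [hX00, hX10]; decide
  rw [psi_neg _ (by rw [hX10]; omega) (-2) hq]
  simp only [neg_neg]
  set X3 := Sm⁻¹ * (Tm^(2:ℤ) * (Um^(1:ℤ) * W)) with hX3def
  have hX300 : X3.1 0 0 = 1 := by rw [hX3def, Si00, T10, hX10]; ring
  have hX310 : X3.1 1 0 = 0 := by rw [hX3def, Si10, T00, hX00, hX10]; ring
  have hX301 : X3.1 0 1 = W.1 1 1 - 1 := by
    rw [hX3def, Si01, T11, U11]
    omega
  rw [psi_c0 X3 hX310 hX300, hX301]
  have key : sP*yP*sP⁻¹ = yP⁻¹*sP*yP⁻¹ := by rw [conjY, i5]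
  calc yP^(-(2:ℤ))*sP*yP^(W.1 1 1 - 1)
      = yP⁻¹*(yP⁻¹*sP*yP⁻¹)*yP^(W.1 1 1) := by group
    _ = yP⁻¹*(sP*yP*sP⁻¹)*yP^(W.1 1 1) := by rw [key]
    _ = (yP⁻¹*sP*yP⁻¹) * (yP^(2:ℤ)*sP⁻¹*yP^(W.1 1 1)) := by group
    _ = uP * (yP^(2:ℤ)*sP⁻¹*yP^(W.1 1 1)) := by rw [i5]

/-- full crossing step at W-shapes -/
lemma GWplus (W : SL2) (h0 : 0 < W.1 0 0) (hv : 0 < W.1 1 0) (hlt : W.1 1 0 < W.1 0 0) :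
    psi (Um^(1:ℤ) * W) = uP * psi W := by
  rcases lt_trichotomy (2 * W.1 1 0) (W.1 0 0) with hreg | heq | hreg
  · exact crossW1 W h0 hv hreg
  · -- τ = 2v; det forces v = 1, τ = 2
    have hdet := detrel W
    have hv1 : W.1 1 0 = 1 := by
      have h : W.1 1 0 * (2 * W.1 1 1 - W.1 0 1) = 1 := by
        rw [← heq] at hdet; linear_combination hdet
      rcases Int.eq_one_or_neg_one_of_mul_eq_one' h with ⟨ha,_⟩|⟨ha,_⟩
      · exact ha
      · omega
    exact crossWedge W (by omega) hv1
  · -- apply crossB1 at X := U * W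
    have h10 : (Um^(1:ℤ) * W).1 1 0 = W.1 1 0 - W.1 0 0 := by rw [U10]; ring
    have h00 : (Um^(1:ℤ) * W).1 0 0 = W.1 0 0 := U00 1 W
    have hB := crossB1 (Um^(1:ℤ) * W) (by omega) (by omega) (by rw [h10, h00]; omega)
    have hmat : Um^(-(1:ℤ)) * (Um^(1:ℤ) * W) = W := by group
    rw [hmat] at hB
    rw [hB]
    group

/-- the chain lemma at W-shapes -/
lemma chainW (W : SL2) (h0 : 0 < W.1 0 0) (hv : 0 < W.1 1 0) (hlt : W.1 1 0 < W.1 0 0)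
    (k : ℤ) : psi (Um^k * W) = uP^k * psi W := by
  rcases lt_trichotomy k 0 with hk | hk | hk
  · exact cW1 W h0 hv hlt k (by omega)
  · subst hk
    have hmat : Um^(0:ℤ) * W = W := by group
    rw [hmat, zpow_zero, one_mul]
  · rw [cW2 W h0 hv hlt k (by omega), GWplus W h0 hv hlt]
    calc sP*yP^(k-1)*sP⁻¹*(uP*psi W) = (sP*yP^(k-1)*sP⁻¹)*uP*psi W := by group
      _ = uP^(k-1)*uP*psi W := by rw [conjYz]
      _ = uP^k*psi W := by group

lemma eq_T_pow (A : SL2) (hc : A.1 1 0 = 0) (h1 : A.1 0 0 = 1) : A = Tm^(A.1 0 1) := by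
  have h2 : A.1 1 1 = 1 := by
    rcases c0_cases A hc with ⟨_,hb⟩|⟨ha,_⟩
    · exact hb
    · omega
  apply SLext
  apply Matrix.ext; intro i j
  fin_cases i <;> fin_cases j <;> simp [coe_T_zpow, hc, h1, h2]

lemma eq_negT_pow (A : SL2) (hc : A.1 1 0 = 0) (h1 : A.1 0 0 = -1) :
    A = Sm^2 * Tm^(-(A.1 0 1)) := by
  have h2 : A.1 1 1 = -1 := by
    rcases c0_cases A hc with ⟨ha,_⟩|⟨_,hb⟩
    · omega
    · exact hb
  apply SLext
  rw [S2_smul, Tp00, Tp01, Tp10, Tp11]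
  apply Matrix.ext; intro i j
  fin_cases i <;> fin_cases j <;> simp [hc, h1, h2]

/-- chains at powers of T (terminal matrices) -/
lemma chainT (k m : ℤ) : psi (Um^k * Tm^m) = uP^k * yP^m := by
  rcases lt_trichotomy k 0 with hk | hk | hk
  · rcases eq_or_lt_of_le (by omega : k ≤ -1) with heq | hk2
    · -- k = -1
      subst heq
      have hX10 : (Um^(-1:ℤ) * Tm^m).1 1 0 = 1 := by rw [U10, Tp10, Tp00]; ring
      have hX00 : (Um^(-1:ℤ) * Tm^m).1 0 0 = 1 := by rw [U00, Tp00]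
      have hq : (Um^(-1:ℤ) * Tm^m).1 0 0 / (Um^(-1:ℤ) * Tm^m).1 1 0 = 1 := by
        rw [hX00, hX10]; decide
      rw [psi_pos _ (by omega) 1 hq]
      have hmat : Sm * (Tm^(-(1:ℤ)) * (Um^(-1:ℤ) * Tm^m)) = Tm^(m+1) := by
        calc Sm * (Tm^(-(1:ℤ)) * (Um^(-1:ℤ) * Tm^m)) = (Sm * Tm⁻¹ * Um⁻¹) * Tm^m := by group
          _ = Tm * Tm^m := by rw [STinvUinv]
          _ = Tm^(m+1) := by group
      rw [hmat, psi_Tpow]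
      calc yP^(1:ℤ)*sP⁻¹*yP^(m+1) = (yP*sP⁻¹*yP)*yP^m := by group
        _ = uP⁻¹*yP^m := by rw [i5inv]
        _ = uP^(-1:ℤ)*yP^m := by group
    · -- k ≤ -2
      have hX10 : (Um^k * Tm^m).1 1 0 = -k := by rw [U10, Tp10, Tp00]; ring
      have hX00 : (Um^k * Tm^m).1 0 0 = 1 := by rw [U00, Tp00]
      have hq : (Um^k * Tm^m).1 0 0 / (Um^k * Tm^m).1 1 0 = 0 := by
        rw [hX00, hX10]
        exact ediv_eq _ _ 0 1 (by ring) (by omega) (by rw [abs_of_pos (by omega : (0:ℤ) < -k)]; omega)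
      rw [psi_pos _ (by rw [hX10]; omega) 0 hq]
      simp only [neg_zero, zpow_zero, one_mul]
      set X2 := Sm * (Um^k * Tm^m) with hX2def
      have hX200 : X2.1 0 0 = -k := by rw [hX2def, S00, hX10]
      have hX210 : X2.1 1 0 = -1 := by rw [hX2def, S10, hX00]
      have hq2 : X2.1 0 0 / X2.1 1 0 = k := by
        rw [hX200, hX210]
        exact ediv_eq _ _ k 0 (by ring) (by omega) (by norm_num)
      rw [psi_neg X2 (by omega) k hq2]
      have hmat : Sm⁻¹ * (Tm^(-k) * X2) = Tm^m := by
        rw [hX2def]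
        calc Sm⁻¹ * (Tm^(-k) * (Sm * (Um^k * Tm^m)))
            = (Sm⁻¹ * Tm^(-k) * Sm) * (Um^k * Tm^m) := by group
          _ = Um^(-k) * (Um^k * Tm^m) := by rw [conjT']
          _ = Tm^m := by group
      rw [hmat, psi_Tpow]
      calc sP⁻¹*(yP^k*sP*yP^m) = (sP⁻¹*yP^k*sP)*yP^m := by group
        _ = uP^k*yP^m := by rw [conjYz']
  · subst hk
    have hmat : Um^(0:ℤ) * Tm^m = Tm^m := by group
    rw [hmat, psi_Tpow, zpow_zero, one_mul]
  · rcases eq_or_lt_of_le (by omega : 1 ≤ k) with heq | hk2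
    · -- k = 1
      subst heq
      have hX10 : (Um^(1:ℤ) * Tm^m).1 1 0 = -1 := by rw [U10, Tp10, Tp00]; ring
      have hX00 : (Um^(1:ℤ) * Tm^m).1 0 0 = 1 := by rw [U00, Tp00]
      have hq : (Um^(1:ℤ) * Tm^m).1 0 0 / (Um^(1:ℤ) * Tm^m).1 1 0 = -1 := by
        rw [hX00, hX10]; decide
      rw [psi_neg _ (by omega) (-1) hq]
      simp only [neg_neg]
      have hmat : Sm⁻¹ * (Tm^(1:ℤ) * (Um^(1:ℤ) * Tm^m)) = Tm^(m-1) := by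
        calc Sm⁻¹ * (Tm^(1:ℤ) * (Um^(1:ℤ) * Tm^m)) = (Sm⁻¹ * Tm * Um) * Tm^m := by group
          _ = Tm⁻¹ * Tm^m := by rw [SinvTU]
          _ = Tm^(m-1) := by group
      rw [hmat, psi_Tpow]
      calc yP^(-(1:ℤ))*sP*yP^(m-1) = (yP⁻¹*sP*yP⁻¹)*yP^m := by group
        _ = uP*yP^m := by rw [i5]
        _ = uP^(1:ℤ)*yP^m := by group
    · -- k ≥ 2
      have hX10 : (Um^k * Tm^m).1 1 0 = -k := by rw [U10, Tp10, Tp00]; ring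
      have hX00 : (Um^k * Tm^m).1 0 0 = 1 := by rw [U00, Tp00]
      have hq : (Um^k * Tm^m).1 0 0 / (Um^k * Tm^m).1 1 0 = 0 := by
        rw [hX00, hX10]
        exact ediv_eq _ _ 0 1 (by ring) (by omega) (by rw [abs_of_neg (by omega : -k < (0:ℤ))]; omega)
      rw [psi_neg _ (by rw [hX10]; omega) 0 hq]
      simp only [neg_zero, zpow_zero, one_mul]
      set X2 := Sm⁻¹ * (Um^k * Tm^m) with hX2def
      have hX200 : X2.1 0 0 = k := by rw [hX2def, Si00, hX10]; ring
      have hX210 : X2.1 1 0 = 1 := by rw [hX2def, Si10, hX00]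
      have hq2 : X2.1 0 0 / X2.1 1 0 = k := by rw [hX200, hX210]; simp
      rw [psi_pos X2 (by omega) k hq2]
      have hmat : Sm * (Tm^(-k) * X2) = Tm^m := by
        rw [hX2def]
        calc Sm * (Tm^(-k) * (Sm⁻¹ * (Um^k * Tm^m)))
            = (Sm * Tm^(-k) * Sm⁻¹) * (Um^k * Tm^m) := by group
          _ = Um^(-k) * (Um^k * Tm^m) := by rw [conjT]
          _ = Tm^m := by group
      rw [hmat, psi_Tpow]
      calc sP*(yP^k*sP⁻¹*yP^m) = (sP*yP^k*sP⁻¹)*yP^m := by group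
        _ = uP^k*yP^m := by rw [conjYz]

/-- the chain lemma at B-shapes -/
lemma chainB (B : SL2) (h0 : 0 < B.1 0 0) (hr : B.1 1 0 ≤ 0) (hlt : -B.1 1 0 < B.1 0 0)
    (k : ℤ) : psi (Um^k * B) = uP^k * psi B := by
  rcases eq_or_lt_of_le hr with h00 | hneg
  · -- B10 = 0 : B = T^m
    have h1 : B.1 0 0 = 1 := by
      rcases c0_cases B h00 with ⟨ha,_⟩|⟨ha,_⟩
      · exact ha
      · omega
    have hB := eq_T_pow B h00 h1
    rw [hB, chainT, psi_Tpow]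
  · set W := Um^(-(1:ℤ)) * B with hWdef
    have hW10 : W.1 1 0 = B.1 1 0 + B.1 0 0 := by rw [hWdef, U10]; ring
    have hW00 : W.1 0 0 = B.1 0 0 := by rw [hWdef, U00]
    have hsh0 : 0 < W.1 0 0 := by omega
    have hshv : 0 < W.1 1 0 := by omega
    have hshlt : W.1 1 0 < W.1 0 0 := by omega
    have hmat : Um^k * B = Um^(k+1) * W := by rw [hWdef]; group
    have hmat1 : Um^(1:ℤ) * W = B := by rw [hWdef]; group
    rw [hmat, chainW W hsh0 hshv hshlt (k+1), ← hmat1, chainW W hsh0 hshv hshlt 1]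
    calc uP^(k+1) * psi W = uP^k * (uP^(1:ℤ) * psi W) := by group
      _ = uP^k * (uP^(1:ℤ) * psi W) := rfl

/-- the chain lemma for all reduced shapes -/
lemma chainAll (X : SL2) (h0 : 0 < X.1 0 0) (hlt : |X.1 1 0| < X.1 0 0)
    (k : ℤ) : psi (Um^k * X) = uP^k * psi X := by
  rcases le_or_gt (X.1 1 0) 0 with h | h
  · exact chainB X h0 h (by rw [abs_of_nonpos h] at hlt; omega) k
  · exact chainW X h0 h (by rw [abs_of_pos h] at hlt; omega) k


/-- main cocycle, positive bottom-left -/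
lemma cocP (M : SL2) (hc : 0 < M.1 1 0) (m : ℤ) :
    psi (Sm * (Tm^m * M)) = sP * yP^m * psi M := by
  obtain ⟨q, hq⟩ : ∃ q, M.1 0 0 / M.1 1 0 = q := ⟨_, rfl⟩
  rw [psi_pos M hc q hq]
  set B := Sm * (Tm^(-q) * M) with hB
  have hr : M.1 0 0 % M.1 1 0 = M.1 0 0 - M.1 1 0 * q := by rw [emod_def', hq]
  have hbd := emod_bounds (M.1 0 0) (M.1 1 0) (by omega)
  rw [abs_of_pos hc] at hbd
  have hB00 : B.1 0 0 = M.1 1 0 := by rw [hB, S00, T10]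
  have hB10 : B.1 1 0 = M.1 1 0 * q - M.1 0 0 := by rw [hB, S10, T00]; ring
  have hmat : Sm * (Tm^m * M) = Um^(m+q) * B := by
    rw [hB]
    calc Sm * (Tm^m * M) = (Sm * Tm^(m+q) * Sm⁻¹) * (Sm * (Tm^(-q) * M)) := by group
      _ = Um^(m+q) * (Sm * (Tm^(-q) * M)) := by rw [conjT]
  rw [hmat, chainAll B (by omega) (by rw [hB00, hB10, abs_of_nonpos (by omega)]; omega) (m+q)]
  calc uP^(m+q) * psi B = (sP*yP^(m+q)*sP⁻¹) * psi B := by rw [conjYz]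
    _ = sP * yP^m * (yP^q * sP⁻¹ * psi B) := by group

/-- main cocycle, negative bottom-left -/
lemma cocN (M : SL2) (hc : M.1 1 0 < 0) (m : ℤ) :
    psi (Sm⁻¹ * (Tm^m * M)) = sP⁻¹ * yP^m * psi M := by
  obtain ⟨q, hq⟩ : ∃ q, M.1 0 0 / M.1 1 0 = q := ⟨_, rfl⟩
  rw [psi_neg M hc q hq]
  set B := Sm⁻¹ * (Tm^(-q) * M) with hB
  have hr : M.1 0 0 % M.1 1 0 = M.1 0 0 - M.1 1 0 * q := by rw [emod_def', hq]
  have hbd := emod_bounds (M.1 0 0) (M.1 1 0) (by omega)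
  rw [abs_of_neg hc] at hbd
  have hB00 : B.1 0 0 = -M.1 1 0 := by rw [hB, Si00, T10]
  have hB10 : B.1 1 0 = M.1 0 0 - M.1 1 0 * q := by rw [hB, Si10, T00]; ring
  have hmat : Sm⁻¹ * (Tm^m * M) = Um^(m+q) * B := by
    rw [hB]
    calc Sm⁻¹ * (Tm^m * M) = (Sm⁻¹ * Tm^(m+q) * Sm) * (Sm⁻¹ * (Tm^(-q) * M)) := by group
      _ = Um^(m+q) * (Sm⁻¹ * (Tm^(-q) * M)) := by rw [conjT']
  rw [hmat, chainAll B (by omega) (by rw [hB00, hB10, abs_of_nonneg (by omega)]; omega) (m+q)]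
  calc uP^(m+q) * psi B = (sP⁻¹*yP^(m+q)*sP) * psi B := by rw [conjYz']
    _ = sP⁻¹ * yP^m * (yP^q * sP * psi B) := by group

lemma sP3 : sP^2 * sP = sP⁻¹ := by
  have h : sP^2*sP = sP^4 * sP⁻¹ := by group
  rw [h, sP4, one_mul]

lemma Sm3 : Sm^2 * Sm = Sm⁻¹ := (Sm_inv_eq).symm

lemma SmInvS2 : Sm⁻¹ * Sm^2 = Sm := by
  rw [Sm_inv_eq]
  have h : Sm^2*Sm*Sm^2 = Sm*Sm^4 := by group
  rw [h, Sm4, mul_one]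

lemma SmS2 : Sm * Sm^2 = Sm⁻¹ := by
  rw [Sm_inv_eq]; group

/-- negation cocycle -/
lemma psi_S2 (M : SL2) : psi (Sm^2 * M) = sP^2 * psi M := by
  rcases lt_trichotomy (M.1 1 0) 0 with hneg | hzero | hpos
  · -- c < 0
    obtain ⟨q, hq⟩ : ∃ q, M.1 0 0 / M.1 1 0 = q := ⟨_, rfl⟩
    rw [psi_neg M hneg q hq]
    set B := Sm⁻¹ * (Tm^(-q) * M) with hB
    have hr : M.1 0 0 % M.1 1 0 = M.1 0 0 - M.1 1 0 * q := by rw [emod_def', hq]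
    have hbd := emod_bounds (M.1 0 0) (M.1 1 0) (by omega)
    rw [abs_of_neg hneg] at hbd
    have hB00 : B.1 0 0 = -M.1 1 0 := by rw [hB, Si00, T10]
    have hB10 : B.1 1 0 = M.1 0 0 - M.1 1 0 * q := by rw [hB, Si10, T00]; ring
    have h2_10 : (Sm^2 * M).1 1 0 = -M.1 1 0 := N10 M
    have h2_00 : (Sm^2 * M).1 0 0 = -M.1 0 0 := N00 M
    rcases eq_or_lt_of_le hbd.1 with hr0 | hrpos
    · -- r = 0, q₂ = q
      have hq2 : (Sm^2*M).1 0 0 / (Sm^2*M).1 1 0 = q := by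
        rw [h2_00, h2_10]
        exact ediv_eq _ _ q 0 (by rw [neg_mul]; omega) (by omega)
          (by rw [abs_of_pos (by omega : (0:ℤ) < -M.1 1 0)]; omega)
      rw [psi_pos (Sm^2*M) (by omega) q hq2]
      have hmat : Sm * (Tm^(-q) * (Sm^2 * M)) = B := by
        rw [hB]
        calc Sm * (Tm^(-q) * (Sm^2 * M)) = Sm * ((Tm^(-q) * Sm^2) * M) := by group
          _ = Sm * ((Sm^2 * Tm^(-q)) * M) := by rw [← S2_comm]
          _ = (Sm * Sm^2) * (Tm^(-q) * M) := by group
          _ = Sm⁻¹ * (Tm^(-q) * M) := by rw [SmS2]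
      rw [hmat]
      calc yP^q * sP⁻¹ * psi B = yP^q * (sP^2*sP) * psi B := by rw [sP3]
        _ = sP^2 * yP^q * sP * psi B := by rw [cenYz]; group
        _ = sP^2 * (yP^q * sP * psi B) := by group
    · -- r > 0, q₂ = q - 1
      have hq2 : (Sm^2*M).1 0 0 / (Sm^2*M).1 1 0 = q - 1 := by
        rw [h2_00, h2_10]
        exact ediv_eq _ _ (q-1) (-M.1 1 0 - M.1 0 0 + M.1 1 0 * q) (by ring)
          (by omega) (by rw [abs_of_pos (by omega : (0:ℤ) < -M.1 1 0)]; omega)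
      rw [psi_pos (Sm^2*M) (by omega) (q-1) hq2]
      have hmat : Sm * (Tm^(-(q-1)) * (Sm^2 * M)) = Um^(1:ℤ) * B := by
        rw [hB]
        calc Sm * (Tm^(-(q-1)) * (Sm^2 * M)) = Sm * ((Tm^(-(q-1)) * Sm^2) * M) := by group
          _ = Sm * ((Sm^2 * Tm^(-(q-1))) * M) := by rw [← S2_comm]
          _ = (Sm * Sm^2) * (Tm^(-(q-1)) * M) := by group
          _ = Sm⁻¹ * (Tm^(-(q-1)) * M) := by rw [SmS2]
          _ = (Sm⁻¹ * Tm^(1:ℤ) * Sm) * (Sm⁻¹ * (Tm^(-q) * M)) := by group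
          _ = Um^(1:ℤ) * (Sm⁻¹ * (Tm^(-q) * M)) := by rw [conjT']
      rw [hmat, chainAll B (by omega) (by rw [hB00, hB10, abs_of_nonneg (by omega)]; omega) 1]
      calc yP^(q-1) * sP⁻¹ * (uP^(1:ℤ) * psi B)
          = yP^(q-1) * sP⁻¹ * ((sP*yP^(1:ℤ)*sP⁻¹) * psi B) := by rw [conjYz]
        _ = yP^q * sP⁻¹ * psi B := by group
        _ = yP^q * (sP^2*sP) * psi B := by rw [sP3]
        _ = sP^2 * yP^q * sP * psi B := by rw [cenYz]; group
        _ = sP^2 * (yP^q * sP * psi B) := by group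
  · -- c = 0
    rcases c0_cases M hzero with ⟨h1, _⟩ | ⟨h1, _⟩
    · rw [psi_c0 M hzero h1,
        psi_c0' (Sm^2*M) (by rw [N10, hzero]; ring) (by rw [N00, h1])]
      rw [N01, neg_neg]
    · rw [psi_c0' M hzero h1,
        psi_c0 (Sm^2*M) (by rw [N10, hzero]; ring) (by rw [N00, h1]; ring)]
      rw [N01]
      calc yP^(-M.1 0 1) = (sP^2*sP^2) * yP^(-M.1 0 1) := by rw [sP2_sq, one_mul]
        _ = sP^2 * (sP^2 * yP^(-M.1 0 1)) := by group
  · -- c > 0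
    obtain ⟨q, hq⟩ : ∃ q, M.1 0 0 / M.1 1 0 = q := ⟨_, rfl⟩
    rw [psi_pos M hpos q hq]
    set B := Sm * (Tm^(-q) * M) with hB
    have hr : M.1 0 0 % M.1 1 0 = M.1 0 0 - M.1 1 0 * q := by rw [emod_def', hq]
    have hbd := emod_bounds (M.1 0 0) (M.1 1 0) (by omega)
    rw [abs_of_pos hpos] at hbd
    have hB00 : B.1 0 0 = M.1 1 0 := by rw [hB, S00, T10]
    have hB10 : B.1 1 0 = M.1 1 0 * q - M.1 0 0 := by rw [hB, S10, T00]; ring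
    have h2_10 : (Sm^2 * M).1 1 0 = -M.1 1 0 := N10 M
    have h2_00 : (Sm^2 * M).1 0 0 = -M.1 0 0 := N00 M
    have hsppp : sP^2 * (sP^2 * sP) = sP := by
      rw [← mul_assoc, sP2_sq, one_mul]
    rcases eq_or_lt_of_le hbd.1 with hr0 | hrpos
    · -- r = 0, q₂ = q
      have hq2 : (Sm^2*M).1 0 0 / (Sm^2*M).1 1 0 = q := by
        rw [h2_00, h2_10]
        exact ediv_eq _ _ q 0 (by rw [neg_mul]; omega) (by omega)
          (by rw [abs_of_neg (by omega : -M.1 1 0 < (0:ℤ))]; omega)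
      rw [psi_neg (Sm^2*M) (by omega) q hq2]
      have hmat : Sm⁻¹ * (Tm^(-q) * (Sm^2 * M)) = B := by
        rw [hB]
        calc Sm⁻¹ * (Tm^(-q) * (Sm^2 * M)) = Sm⁻¹ * ((Tm^(-q) * Sm^2) * M) := by group
          _ = Sm⁻¹ * ((Sm^2 * Tm^(-q)) * M) := by rw [← S2_comm]
          _ = (Sm⁻¹ * Sm^2) * (Tm^(-q) * M) := by group
          _ = Sm * (Tm^(-q) * M) := by rw [SmInvS2]
      rw [hmat]
      calc yP^q * sP * psi B = yP^q * (sP^2 * (sP^2 * sP)) * psi B := by rw [hsppp]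
        _ = sP^2 * yP^q * (sP^2 * sP) * psi B := by rw [cenYz]; group
        _ = sP^2 * yP^q * sP⁻¹ * psi B := by rw [sP3]
        _ = sP^2 * (yP^q * sP⁻¹ * psi B) := by group
    · -- r > 0, q₂ = q + 1
      have hq2 : (Sm^2*M).1 0 0 / (Sm^2*M).1 1 0 = q + 1 := by
        rw [h2_00, h2_10]
        exact ediv_eq _ _ (q+1) (M.1 1 0 - M.1 0 0 + M.1 1 0 * q) (by ring)
          (by omega) (by rw [abs_of_neg (by omega : -M.1 1 0 < (0:ℤ))]; omega)
      rw [psi_neg (Sm^2*M) (by omega) (q+1) hq2]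
      have hmat : Sm⁻¹ * (Tm^(-(q+1)) * (Sm^2 * M)) = Um^(-(1:ℤ)) * B := by
        rw [hB]
        calc Sm⁻¹ * (Tm^(-(q+1)) * (Sm^2 * M)) = Sm⁻¹ * ((Tm^(-(q+1)) * Sm^2) * M) := by group
          _ = Sm⁻¹ * ((Sm^2 * Tm^(-(q+1))) * M) := by rw [← S2_comm]
          _ = (Sm⁻¹ * Sm^2) * (Tm^(-(q+1)) * M) := by group
          _ = Sm * (Tm^(-(q+1)) * M) := by rw [SmInvS2]
          _ = (Sm * Tm^(-(1:ℤ)) * Sm⁻¹) * (Sm * (Tm^(-q) * M)) := by group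
          _ = Um^(-(1:ℤ)) * (Sm * (Tm^(-q) * M)) := by rw [conjT]
      rw [hmat, chainAll B (by omega) (by rw [hB00, hB10, abs_of_nonpos (by omega)]; omega) (-1)]
      calc yP^(q+1) * sP * (uP^(-(1:ℤ)) * psi B)
          = yP^(q+1) * sP * ((sP⁻¹*yP^(-(1:ℤ))*sP) * psi B) := by rw [conjYz']
        _ = yP^q * sP * psi B := by group
        _ = yP^q * (sP^2 * (sP^2 * sP)) * psi B := by rw [hsppp]
        _ = sP^2 * yP^q * (sP^2 * sP) * psi B := by rw [cenYz]; group
        _ = sP^2 * yP^q * sP⁻¹ * psi B := by rw [sP3]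
        _ = sP^2 * (yP^q * sP⁻¹ * psi B) := by group

/-- S-cocycle -/
lemma psi_S (M : SL2) : psi (Sm * M) = sP * psi M := by
  rcases lt_trichotomy (M.1 1 0) 0 with hneg | hzero | hpos
  · have h1 := cocN M hneg 0
    have hmm : Sm⁻¹ * (Tm^(0:ℤ) * M) = Sm⁻¹ * M := by group
    rw [hmm] at h1
    simp only [zpow_zero, mul_one] at h1
    have hmat : Sm * M = Sm^2 * (Sm⁻¹ * M) := by group
    rw [hmat, psi_S2, h1]
    calc sP^2 * (sP⁻¹ * psi M) = (sP^2 * sP⁻¹) * psi M := by group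
      _ = sP * psi M := by group
  · rcases c0_cases M hzero with ⟨h1, _⟩ | ⟨h1, _⟩
    · have h10 : (Sm * M).1 1 0 = -1 := by rw [S10, h1]
      have h00 : (Sm * M).1 0 0 = 0 := by rw [S00, hzero]
      have hq : (Sm*M).1 0 0 / (Sm*M).1 1 0 = 0 := by rw [h00, h10]; decide
      rw [psi_neg (Sm*M) (by omega) 0 hq]
      simp only [neg_zero, zpow_zero, one_mul]
      have hmat : Sm⁻¹ * (Sm * M) = M := by group
      rw [hmat]
    · have h10 : (Sm * M).1 1 0 = 1 := by rw [S10, h1]; ring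
      have h00 : (Sm * M).1 0 0 = 0 := by rw [S00, hzero]
      have hq : (Sm*M).1 0 0 / (Sm*M).1 1 0 = 0 := by rw [h00, h10]; decide
      rw [psi_pos (Sm*M) (by omega) 0 hq]
      simp only [neg_zero, zpow_zero, one_mul]
      have hmat : Sm * (Sm * M) = Sm^2 * M := by rw [sq, mul_assoc]
      rw [hmat, psi_S2]
      calc sP⁻¹ * (sP^2 * psi M) = (sP⁻¹ * sP^2) * psi M := by group
        _ = sP * psi M := by group
  · have h1 := cocP M hpos 0
    have hmm : Sm * (Tm^(0:ℤ) * M) = Sm * M := by group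
    rw [hmm] at h1
    simp only [zpow_zero, mul_one] at h1
    exact h1

/-- S⁻¹-cocycle -/
lemma psi_Sinv (M : SL2) : psi (Sm⁻¹ * M) = sP⁻¹ * psi M := by
  have hmat : Sm⁻¹ * M = Sm^2 * (Sm * M) := by
    calc Sm⁻¹ * M = (Sm^2 * Sm) * M := by rw [Sm3]
      _ = Sm^2 * (Sm * M) := by group
  rw [hmat, psi_S2, psi_S]
  calc sP^2 * (sP * psi M) = (sP^2 * sP) * psi M := by group
    _ = sP⁻¹ * psi M := by rw [sP3]

/-- U-cocycle -/
lemma psi_Um (A : SL2) : psi (Um * A) = uP * psi A := by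
  have hmat : Um * A = Sm * (Tm^(1:ℤ) * (Sm⁻¹ * A)) := by
    rw [Um_eq_conj]; group
  rw [hmat, psi_S, psi_T, psi_Sinv]
  calc sP * (yP^(1:ℤ) * (sP⁻¹ * psi A)) = (sP * yP * sP⁻¹) * psi A := by group
    _ = uP * psi A := by rw [conjY]

lemma psi_Tm (A : SL2) : psi (Tm * A) = yP * psi A := by
  have hmat : Tm * A = Tm^(1:ℤ) * A := by group
  rw [hmat, psi_T]
  group


lemma braidSL : Tm * Um * Tm = Um * Tm * Um := by
  apply SLext
  rw [coe_mul', coe_mul']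
  show _ = (Um.1 * Tm.1) * Um.1
  show (!![1,1;0,1] : Matrix (Fin 2) (Fin 2) ℤ) * !![1,0;-1,1] * !![1,1;0,1]
      = !![1,0;-1,1] * !![1,1;0,1] * !![1,0;-1,1]
  rw [mul2, mul2, mul2, mul2]
  norm_num

noncomputable def fgen : SL2Gen → SL2 := fun g => match g with
  | SL2Gen.y => Tm
  | SL2Gen.u => Um

lemma hrels : ∀ r ∈ SL2Rels, FreeGroup.lift fgen r = 1 := by
  intro r hr
  rcases Set.mem_insert_iff.mp hr with h | h
  · subst h
    simp only [map_mul, map_inv, FreeGroup.lift_apply_of]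
    show fgen SL2Gen.y * fgen SL2Gen.u * fgen SL2Gen.y *
      (fgen SL2Gen.u * fgen SL2Gen.y * fgen SL2Gen.u)⁻¹ = 1
    show Tm * Um * Tm * (Um * Tm * Um)⁻¹ = 1
    rw [mul_inv_eq_one]
    exact braidSL
  · rw [Set.mem_singleton_iff] at h
    subst h
    simp only [map_pow, map_mul, FreeGroup.lift_apply_of]
    show (fgen SL2Gen.y * fgen SL2Gen.u * fgen SL2Gen.y)^4 = 1
    show (Tm * Um * Tm)^4 = 1
    exact Sm4

noncomputable def chi : P →* SL2 := PresentedGroup.toGroup hrels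

lemma chi_y : chi yP = Tm := PresentedGroup.toGroup.of hrels

lemma chi_u : chi uP = Um := PresentedGroup.toGroup.of hrels

lemma chi_s : chi sP = Sm := by
  show chi (yP * uP * yP) = Sm
  rw [map_mul, map_mul, chi_y, chi_u]
  rfl

/-- chi is a left inverse of psi -/
lemma chi_psi (A : SL2) : chi (psi A) = A := by
  by_cases hc : A.1 1 0 = 0
  · rcases c0_cases A hc with ⟨h1,_⟩|⟨h1,_⟩
    · rw [psi_c0 A hc h1, map_zpow, chi_y, ← eq_T_pow A hc h1]
    · rw [psi_c0' A hc h1, map_mul, map_pow, map_zpow, chi_s, chi_y,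
        ← eq_negT_pow A hc h1]
  · rcases lt_or_gt_of_ne hc with hneg | hpos
    · rw [psi_neg A hneg _ rfl, map_mul, map_mul, map_zpow, chi_y, chi_s,
        chi_psi (Sm⁻¹ * (Tm ^ (-(A.1 0 0 / A.1 1 0)) * A))]
      group
    · rw [psi_pos A hpos _ rfl, map_mul, map_mul, map_zpow, map_inv, chi_y, chi_s,
        chi_psi (Sm * (Tm ^ (-(A.1 0 0 / A.1 1 0)) * A))]
      group
termination_by (A.1 1 0).natAbs
decreasing_by
  · have h := emod_bounds (A.1 0 0) (A.1 1 0) hc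
    rw [Int.abs_eq_natAbs] at h
    have e2 : (Tm ^ (-(A.1 0 0 / A.1 1 0)) * A).1 0 0
        = A.1 0 0 % A.1 1 0 := by
      rw [T_smul]; show A.1 0 0 + -(A.1 0 0 / A.1 1 0) * A.1 1 0 = _
      rw [emod_def']; ring
    first
    | (have e : (Sm⁻¹ * (Tm ^ (-(A.1 0 0 / A.1 1 0)) * A)).1 1 0
          = (Tm ^ (-(A.1 0 0 / A.1 1 0)) * A).1 0 0 := by
        rw [Sinv_smul]; simp
       rw [e, e2]; omega)
    | (have e : (Sm * (Tm ^ (-(A.1 0 0 / A.1 1 0)) * A)).1 1 0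
          = -((Tm ^ (-(A.1 0 0 / A.1 1 0)) * A).1 0 0) := by
        rw [S_smul]; simp
       rw [e, e2]; omega)
  · have h := emod_bounds (A.1 0 0) (A.1 1 0) hc
    rw [Int.abs_eq_natAbs] at h
    have e2 : (Tm ^ (-(A.1 0 0 / A.1 1 0)) * A).1 0 0
        = A.1 0 0 % A.1 1 0 := by
      rw [T_smul]; show A.1 0 0 + -(A.1 0 0 / A.1 1 0) * A.1 1 0 = _
      rw [emod_def']; ring
    first
    | (have e : (Sm⁻¹ * (Tm ^ (-(A.1 0 0 / A.1 1 0)) * A)).1 1 0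
          = (Tm ^ (-(A.1 0 0 / A.1 1 0)) * A).1 0 0 := by
        rw [Sinv_smul]; simp
       rw [e, e2]; omega)
    | (have e : (Sm * (Tm ^ (-(A.1 0 0 / A.1 1 0)) * A)).1 1 0
          = -((Tm ^ (-(A.1 0 0 / A.1 1 0)) * A).1 0 0) := by
        rw [S_smul]; simp
       rw [e, e2]; omega)

lemma psi_Tval : psi Tm = yP := by
  have h := psi_Tpow 1
  rwa [zpow_one] at h

lemma psi_Uval : psi Um = uP := by
  have h := psi_Um 1
  rwa [mul_one, psi_one, mul_one] at h

/-- the set of elements satisfying the cocycle identity is a subgroup -/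
noncomputable def K : Subgroup SL2 where
  carrier := {g | ∀ A, psi (g * A) = psi g * psi A}
  one_mem' := by
    intro A
    rw [one_mul, psi_one, one_mul]
  mul_mem' := by
    intro a b ha hb A
    have h1 : psi (a * b * A) = psi a * psi (b * A) := by
      rw [mul_assoc]; exact ha (b * A)
    rw [h1, hb A, ha b, mul_assoc]
  inv_mem' := by
    intro a ha A
    have hainy : a * a⁻¹ = 1 := by group
    have h2 : psi (a * a⁻¹) = psi a * psi a⁻¹ := ha a⁻¹
    rw [hainy, psi_one] at h2
    have hinv : psi a⁻¹ = (psi a)⁻¹ := (inv_eq_of_mul_eq_one_right h2.symm).symm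
    have h1 : psi (a * (a⁻¹ * A)) = psi a * psi (a⁻¹ * A) := ha (a⁻¹ * A)
    rw [← mul_assoc, hainy, one_mul] at h1
    rw [hinv]
    rw [h1]
    group

lemma TmemK : Tm ∈ K := by
  intro A
  rw [psi_Tm A, psi_Tval]

lemma UmemK : Um ∈ K := by
  intro A
  rw [psi_Um A, psi_Uval]

lemma allK : ∀ g : SL2, g ∈ K := by
  have h1 : ∀ x : P, chi x ∈ K := by
    intro x
    refine PresentedGroup.generated_by SL2Rels (K.comap chi) ?_ x
    intro j
    cases j
    · show chi (PresentedGroup.of SL2Gen.y) ∈ K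
      rw [show (PresentedGroup.of SL2Gen.y : P) = yP from rfl, chi_y]
      exact TmemK
    · show chi (PresentedGroup.of SL2Gen.u) ∈ K
      rw [show (PresentedGroup.of SL2Gen.u : P) = uP from rfl, chi_u]
      exact UmemK
  intro g
  have h := h1 (psi g)
  rwa [chi_psi] at h

lemma psi_mul (g A : SL2) : psi (g * A) = psi g * psi A := allK g A

lemma psi_inv (g : SL2) : psi g⁻¹ = (psi g)⁻¹ := by
  have h := psi_mul g g⁻¹
  rw [show g * g⁻¹ = 1 from by group, psi_one] at h
  exact (inv_eq_of_mul_eq_one_right h.symm).symm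

/-- psi is a left inverse of chi -/
lemma psi_chi (x : P) : psi (chi x) = x := by
  refine PresentedGroup.induction_on (C := fun p => psi (chi p) = p) x ?_
  intro z
  induction z using FreeGroup.induction_on with
  | C1 =>
      rw [map_one, map_one, psi_one]
  | of g =>
      cases g
      · show psi (chi yP) = yP
        rw [chi_y, psi_Tval]
      · show psi (chi uP) = uP
        rw [chi_u, psi_Uval]
  | inv_of g ih =>
      rw [map_inv, map_inv, psi_inv, ih]
  | mul a b iha ihb =>
      rw [map_mul, map_mul, psi_mul, iha, ihb]

end SL2Presentation

/-- `SL(2,ℤ)` admits the presentation `⟨y, u ∣ yuy = uyu, (yuy)^4 = 1⟩`, where `y`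
corresponds to `[[1,1],[0,1]]` and `u` to `[[1,0],[-1,1]]`. -/
theorem SL2Z_presentation :
    ∃ φ : PresentedGroup SL2Rels ≃* Matrix.SpecialLinearGroup (Fin 2) ℤ,
      φ (PresentedGroup.of SL2Gen.y) = SL2y ∧ φ (PresentedGroup.of SL2Gen.u) = SL2u := by
  have hbij : Function.Bijective SL2Presentation.chi :=
    ⟨fun x y h => by rw [← SL2Presentation.psi_chi x, h, SL2Presentation.psi_chi],
     fun A => ⟨SL2Presentation.psi A, SL2Presentation.chi_psi A⟩⟩
  refine ⟨MulEquiv.ofBijective SL2Presentation.chi hbij, ?_, ?_⟩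
  · show SL2Presentation.chi (PresentedGroup.of SL2Gen.y) = SL2y
    exact SL2Presentation.chi_y
  · show SL2Presentation.chi (PresentedGroup.of SL2Gen.u) = SL2u
    exact SL2Presentation.chi_u
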